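/- Let Γ be a connected regular graph with d+1 distinct eigenvalues and diameter D, and suppose its adjacency algebra 𝒜 = span{I,A,...,A^d} is closed under Hadamard multiplication. Then every distance matrix A_i (0 ≤ i ≤ D) of Γ lies in 𝒜; i.e., Γ is distance-polynomial. -/

import Mathlib

open Matrix Polynomial


namespace Stmt19

lemma sum3_lt (n : ℕ) (T : Finset ℕ) (hT : ∀ j ∈ T, j < n) :
    ∑ j ∈ T, 3 ^ j < 3 ^ n := by
  induction n generalizing T with
  | zero =>
    have : T = ∅ := Finset.eq_empty_of_forall_notMem fun j hj => by
      have := hT j hj; omega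
    simp [this]
  | succ n ih =>
    have h1 : ∑ j ∈ T.erase n, 3 ^ j < 3 ^ n := ih _ (fun j hj => by
      have h2 := hT j (Finset.mem_of_mem_erase hj)
      have h3 := Finset.ne_of_mem_erase hj
      omega)
    have hp : (3:ℕ) ^ (n+1) = 3 * 3 ^ n := by rw [pow_succ]; ring
    by_cases hn : n ∈ T
    · rw [← Finset.insert_erase hn, Finset.sum_insert (Finset.notMem_erase _ _)]
      omega
    · rw [← Finset.erase_eq_of_notMem hn]
      omega

lemma sum3_inj (n : ℕ) : ∀ (T U : Finset ℕ), (∀ j ∈ T, j < n) → (∀ j ∈ U, j < n) →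
    ∑ j ∈ T, 3 ^ j = ∑ j ∈ U, 3 ^ j → T = U := by
  induction n with
  | zero =>
    intro T U hT hU _
    have hT' : T = ∅ := Finset.eq_empty_of_forall_notMem fun j hj => by
      have := hT j hj; omega
    have hU' : U = ∅ := Finset.eq_empty_of_forall_notMem fun j hj => by
      have := hU j hj; omega
    rw [hT', hU']
  | succ n ih =>
    intro T U hT hU hsum
    have hTe : ∀ j ∈ T.erase n, j < n := fun j hj => by
      have := hT j (Finset.mem_of_mem_erase hj)
      have := Finset.ne_of_mem_erase hj
      omega
    have hUe : ∀ j ∈ U.erase n, j < n := fun j hj => by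
      have := hU j (Finset.mem_of_mem_erase hj)
      have := Finset.ne_of_mem_erase hj
      omega
    have hTlt := sum3_lt n _ hTe
    have hUlt := sum3_lt n _ hUe
    by_cases hnT : n ∈ T <;> by_cases hnU : n ∈ U
    · have e1 : ∑ j ∈ T, 3 ^ j = 3 ^ n + ∑ j ∈ T.erase n, 3 ^ j := by
        rw [← Finset.sum_insert (Finset.notMem_erase n T), Finset.insert_erase hnT]
      have e2 : ∑ j ∈ U, 3 ^ j = 3 ^ n + ∑ j ∈ U.erase n, 3 ^ j := by
        rw [← Finset.sum_insert (Finset.notMem_erase n U), Finset.insert_erase hnU]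
      have := ih (T.erase n) (U.erase n) hTe hUe (by omega)
      rw [← Finset.insert_erase hnT, ← Finset.insert_erase hnU, this]
    · exfalso
      have e1 : ∑ j ∈ T, 3 ^ j = 3 ^ n + ∑ j ∈ T.erase n, 3 ^ j := by
        rw [← Finset.sum_insert (Finset.notMem_erase n T), Finset.insert_erase hnT]
      have hUe' : ∀ j ∈ U, j < n := fun j hj => by
        have := hU j hj
        have : j ≠ n := fun h => hnU (h ▸ hj)
        omega
      have := sum3_lt n U hUe'
      omega
    · exfalso
      have e2 : ∑ j ∈ U, 3 ^ j = 3 ^ n + ∑ j ∈ U.erase n, 3 ^ j := by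
        rw [← Finset.sum_insert (Finset.notMem_erase n U), Finset.insert_erase hnU]
      have hTe' : ∀ j ∈ T, j < n := fun j hj => by
        have := hT j hj
        have : j ≠ n := fun h => hnT (h ▸ hj)
        omega
      have := sum3_lt n T hTe'
      omega
    · exact ih T U (fun j hj => by
        have := hT j hj
        have : j ≠ n := fun h => hnT (h ▸ hj)
        omega) (fun j hj => by
        have := hU j hj
        have : j ≠ n := fun h => hnU (h ▸ hj)
        omega) hsum

lemma sum3_inj_real {T U : Finset ℕ} {n : ℕ} (hT : ∀ j ∈ T, j < n) (hU : ∀ j ∈ U, j < n)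
    (h : ∑ j ∈ T, (3:ℝ) ^ j = ∑ j ∈ U, (3:ℝ) ^ j) : T = U := by
  apply sum3_inj n T U hT hU
  have : ((∑ j ∈ T, 3 ^ j : ℕ) : ℝ) = ((∑ j ∈ U, 3 ^ j : ℕ) : ℝ) := by
    push_cast
    exact h
  exact_mod_cast this

end Stmt19

namespace Stmt19


variable {X : Type*} [Fintype X] [DecidableEq X]

section SpanLemmas

variable (A : Matrix X X ℝ) (d : ℕ)

lemma gen_mem {j : ℕ} (hj : j ≤ d) :
    A ^ j ∈ Submodule.span ℝ (Set.range fun j : Fin (d + 1) => A ^ (j : ℕ)) :=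
  Submodule.subset_span ⟨⟨j, by omega⟩, rfl⟩

lemma mulA_mem
    (key : A ^ (d + 1) ∈ Submodule.span ℝ (Set.range fun j : Fin (d + 1) => A ^ (j : ℕ)))
    {M : Matrix X X ℝ}
    (hM : M ∈ Submodule.span ℝ (Set.range fun j : Fin (d + 1) => A ^ (j : ℕ))) :
    A * M ∈ Submodule.span ℝ (Set.range fun j : Fin (d + 1) => A ^ (j : ℕ)) := by
  induction hM using Submodule.span_induction with
  | mem x hx =>
    obtain ⟨j, rfl⟩ := hx
    rw [← pow_succ']
    rcases Nat.lt_or_ge (j : ℕ) d with h | h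
    · exact gen_mem A d (by omega)
    · have hj : (j : ℕ) = d := by omega
      rw [hj]
      exact key
  | zero => rw [mul_zero]; exact Submodule.zero_mem _
  | add x y _ _ hx hy => rw [mul_add]; exact Submodule.add_mem _ hx hy
  | smul c x _ hx => rw [mul_smul_comm]; exact Submodule.smul_mem _ _ hx

lemma pow_mem
    (key : A ^ (d + 1) ∈ Submodule.span ℝ (Set.range fun j : Fin (d + 1) => A ^ (j : ℕ)))
    (n : ℕ) :
    A ^ n ∈ Submodule.span ℝ (Set.range fun j : Fin (d + 1) => A ^ (j : ℕ)) := by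
  induction n with
  | zero => exact gen_mem A d (Nat.zero_le d)
  | succ n ih => rw [pow_succ']; exact mulA_mem A d key ih

variable (hhad : ∀ M ∈ Submodule.span ℝ (Set.range fun j : Fin (d + 1) => A ^ (j : ℕ)),
      ∀ N ∈ Submodule.span ℝ (Set.range fun j : Fin (d + 1) => A ^ (j : ℕ)),
      Matrix.hadamard M N ∈ Submodule.span ℝ (Set.range fun j : Fin (d + 1) => A ^ (j : ℕ)))

include hhad in
lemma hpow_mem {M : Matrix X X ℝ}
    (hM : M ∈ Submodule.span ℝ (Set.range fun j : Fin (d + 1) => A ^ (j : ℕ))) (n : ℕ) :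
    Matrix.of (fun x y => M x y ^ (n + 1)) ∈
      Submodule.span ℝ (Set.range fun j : Fin (d + 1) => A ^ (j : ℕ)) := by
  induction n with
  | zero =>
    have h1 : Matrix.of (fun x y => M x y ^ (0 + 1)) = M := by
      ext x y
      rw [Matrix.of_apply, pow_one]
    rw [h1]; exact hM
  | succ n ih =>
    have h1 : Matrix.of (fun x y => M x y ^ (n + 1 + 1)) =
        Matrix.hadamard M (Matrix.of (fun x y => M x y ^ (n + 1))) := by
      ext x y
      rw [Matrix.hadamard_apply, Matrix.of_apply, Matrix.of_apply, pow_succ']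
    rw [h1]
    exact hhad M hM _ ih

include hhad in
lemma polyapply_mem {M : Matrix X X ℝ}
    (hM : M ∈ Submodule.span ℝ (Set.range fun j : Fin (d + 1) => A ^ (j : ℕ)))
    {p : ℝ[X]} (hp : p.coeff 0 = 0) :
    Matrix.of (fun x y => p.eval (M x y)) ∈
      Submodule.span ℝ (Set.range fun j : Fin (d + 1) => A ^ (j : ℕ)) := by
  have hrep : Matrix.of (fun x y => p.eval (M x y)) =
      ∑ k ∈ Finset.range (p.natDegree + 1), p.coeff k • Matrix.of (fun x y => M x y ^ k) := by
    ext x y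
    rw [Matrix.sum_apply]
    simp only [Matrix.smul_apply, Matrix.of_apply, smul_eq_mul]
    exact p.eval_eq_sum_range (M x y)
  rw [hrep]
  apply Submodule.sum_mem
  intro k _
  cases k with
  | zero => rw [hp, zero_smul]; exact Submodule.zero_mem _
  | succ k => exact Submodule.smul_mem _ _ (hpow_mem A d hhad hM k)

include hhad in
lemma gapply_mem {M : Matrix X X ℝ}
    (hM : M ∈ Submodule.span ℝ (Set.range fun j : Fin (d + 1) => A ^ (j : ℕ)))
    (g : ℝ → ℝ) (hg : g 0 = 0) :
    Matrix.of (fun x y => g (M x y)) ∈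
      Submodule.span ℝ (Set.range fun j : Fin (d + 1) => A ^ (j : ℕ)) := by
  classical
  set V : Finset ℝ := insert 0 (Finset.image (fun xy : X × X => M xy.1 xy.2) Finset.univ) with hV
  set p : ℝ[X] := Lagrange.interpolate V id g with hp
  have hnode : ∀ t ∈ V, p.eval t = g t := by
    intro t ht
    have := Lagrange.eval_interpolate_at_node g (Set.injOn_id _) ht
    exact this
  have h0 : p.coeff 0 = 0 := by
    rw [Polynomial.coeff_zero_eq_eval_zero, hnode 0 (Finset.mem_insert_self _ _), hg]
  have heq : Matrix.of (fun x y => g (M x y)) = Matrix.of (fun x y => p.eval (M x y)) := by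
    ext x y
    rw [Matrix.of_apply, Matrix.of_apply,
      hnode (M x y) (Finset.mem_insert_of_mem (Finset.mem_image.2 ⟨(x, y), Finset.mem_univ _, rfl⟩))]
  rw [heq]
  exact polyapply_mem A d hhad hM h0

end SpanLemmas

end Stmt19

namespace Stmt19


variable {X : Type*} [Fintype X] [DecidableEq X]

/-- Conjugation by a pair of mutually inverse matrices, as an algebra homomorphism. -/
def conjAlgHom (U V : Matrix X X ℝ) (h1 : U * V = 1) (h2 : V * U = 1) :
    Matrix X X ℝ →ₐ[ℝ] Matrix X X ℝ where
  toFun M := U * M * V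
  map_one' := by show U * 1 * V = 1; rw [mul_one, h1]
  map_mul' M N := by
    show U * (M * N) * V = (U * M * V) * (U * N * V)
    have h3 : V * (U * (N * V)) = N * V := by rw [← mul_assoc, h2, one_mul]
    simp only [mul_assoc, h3]
  map_zero' := by show U * 0 * V = 0; rw [mul_zero, zero_mul]
  map_add' M N := by
    show U * (M + N) * V = U * M * V + U * N * V
    rw [mul_add, add_mul]
  commutes' r := by
    show U * algebraMap ℝ (Matrix X X ℝ) r * V = algebraMap ℝ (Matrix X X ℝ) r
    rw [Algebra.algebraMap_eq_smul_one, mul_smul_comm, mul_one, smul_mul_assoc, h1]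

lemma aeval_prod_spectrum_eq_zero (A : Matrix X X ℝ) (hA : A.IsHermitian)
    (F : Finset ℝ) (hF : ∀ i : X, hA.eigenvalues i ∈ F) :
    Polynomial.aeval A (∏ μ ∈ F, (Polynomial.X - Polynomial.C μ)) = 0 := by
  set U : Matrix X X ℝ := (hA.eigenvectorUnitary : Matrix X X ℝ) with hU
  have h1 : U * star U = 1 := Matrix.mem_unitaryGroup_iff.mp hA.eigenvectorUnitary.2
  have h2 : star U * U = 1 := Matrix.mem_unitaryGroup_iff'.mp hA.eigenvectorUnitary.2
  set φ := conjAlgHom U (star U) h1 h2 with hφ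
  set p : ℝ[X] := ∏ μ ∈ F, (Polynomial.X - Polynomial.C μ) with hp
  have hAeq : A = φ (Matrix.diagonalAlgHom ℝ hA.eigenvalues) := by
    have := hA.spectral_theorem
    conv_lhs => rw [this]
    show U * Matrix.diagonal (RCLike.ofReal ∘ hA.eigenvalues) * star U =
      U * Matrix.diagonal hA.eigenvalues * star U
    congr 1
  have hdiag : Polynomial.aeval hA.eigenvalues p = 0 := by
    funext i
    have hi : Polynomial.aeval hA.eigenvalues p i =
        Polynomial.aeval (hA.eigenvalues i) p :=
      (Polynomial.aeval_algHom_apply (Pi.evalAlgHom ℝ (fun _ => ℝ) i) hA.eigenvalues p).symm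
    rw [hi]
    rw [show Polynomial.aeval (hA.eigenvalues i) p = Polynomial.eval (hA.eigenvalues i) p from by
      simp [Polynomial.aeval_def, Polynomial.eval₂_eq_eval_map], hp,
      Polynomial.eval_prod]
    refine Finset.prod_eq_zero (hF i) ?_
    simp
  rw [hAeq, Polynomial.aeval_algHom_apply, Polynomial.aeval_algHom_apply, hdiag,
    map_zero, map_zero]

lemma key_mem (A : Matrix X X ℝ) (hA : A.IsHermitian) (d : ℕ)
    (hspec : (spectrum ℝ A).ncard = d + 1) :
    A ^ (d + 1) ∈ Submodule.span ℝ (Set.range fun j : Fin (d + 1) => A ^ (j : ℕ)) := by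
  have hfin : (spectrum ℝ A).Finite := by
    rcases Set.finite_or_infinite (spectrum ℝ A) with h | h
    · exact h
    · rw [h.ncard] at hspec; omega
  set F : Finset ℝ := hfin.toFinset with hFdef
  have hcard : F.card = d + 1 := by
    rw [← Set.ncard_eq_toFinset_card _ hfin] at *
    exact hspec
  set p : ℝ[X] := ∏ μ ∈ F, (Polynomial.X - Polynomial.C μ) with hp
  have hmonic : p.Monic := monic_prod_of_monic _ _ fun μ _ => monic_X_sub_C μ
  have hdeg : p.natDegree = d + 1 := by
    rw [hp, Polynomial.natDegree_prod _ _ (fun μ _ => Polynomial.X_sub_C_ne_zero μ)]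
    simp [hcard]
  have haeval : Polynomial.aeval A p = 0 := by
    apply aeval_prod_spectrum_eq_zero A hA
    intro i
    exact hfin.mem_toFinset.mpr (hA.eigenvalues_mem_spectrum_real i)
  set q : ℝ[X] := Polynomial.X ^ (d + 1) - p with hq
  have hAq : Polynomial.aeval A q = A ^ (d + 1) := by
    rw [hq, map_sub, Polynomial.aeval_X_pow, haeval, sub_zero]
  by_cases hq0 : q = 0
  · rw [← hAq, hq0, map_zero]
    exact Submodule.zero_mem _
  · have hdlt : q.degree < ((d + 1 : ℕ) : WithBot ℕ) := by
      have hdp : p.degree = ((d + 1 : ℕ) : WithBot ℕ) := by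
        rw [Polynomial.degree_eq_natDegree hmonic.ne_zero, hdeg]
      have := Polynomial.degree_sub_lt
        (by rw [Polynomial.degree_X_pow, hdp] : (Polynomial.X ^ (d+1) : ℝ[X]).degree = p.degree)
        (pow_ne_zero _ Polynomial.X_ne_zero)
        (by rw [Polynomial.leadingCoeff_X_pow, hmonic.leadingCoeff])
      rwa [Polynomial.degree_X_pow] at this
    have hnlt : q.natDegree < d + 1 := (Polynomial.natDegree_lt_iff_degree_lt hq0).mpr hdlt
    rw [← hAq, Polynomial.aeval_eq_sum_range' hnlt]
    apply Submodule.sum_mem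
    intro k hk
    exact Submodule.smul_mem _ _ (Submodule.subset_span
      ⟨⟨k, Finset.mem_range.mp hk⟩, rfl⟩)

end Stmt19

namespace Stmt19


variable {X : Type*} [Fintype X] [DecidableEq X]

lemma dist_le_of_entry_ne {G : SimpleGraph X} [DecidableRel G.Adj] {n : ℕ} {x y : X}
    (h : ((G.adjMatrix ℝ) ^ n) x y ≠ 0) : G.dist x y ≤ n := by
  rw [SimpleGraph.adjMatrix_pow_apply_eq_card_walk] at h
  have hcard : Fintype.card {p : G.Walk x y | p.length = n} ≠ 0 := by exact_mod_cast h
  obtain ⟨⟨p, hp⟩⟩ := Fintype.card_pos_iff.mp (Nat.pos_of_ne_zero hcard)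
  exact hp ▸ SimpleGraph.dist_le p

lemma entry_dist_ne {G : SimpleGraph X} [DecidableRel G.Adj] (hconn : G.Connected) (x y : X) :
    ((G.adjMatrix ℝ) ^ (G.dist x y)) x y ≠ 0 := by
  rw [SimpleGraph.adjMatrix_pow_apply_eq_card_walk]
  obtain ⟨p, hp⟩ := hconn.exists_walk_length_eq_dist x y
  haveI : Nonempty {q : G.Walk x y | q.length = G.dist x y} := ⟨⟨p, hp⟩⟩
  exact_mod_cast (Fintype.card_ne_zero (α := {q : G.Walk x y | q.length = G.dist x y}))

end Stmt19

open Stmt19 in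
/-- If the adjacency algebra 𝒜 = span{I,A,...,A^d} of a connected
regular graph with d+1 distinct eigenvalues and diameter D is closed under
Hadamard multiplication, then every distance matrix A_i (0 ≤ i ≤ D) lies in 𝒜;
i.e. the graph is distance-polynomial. -/
theorem stmt_19 {X : Type*} [Fintype X] [DecidableEq X]
    (G : SimpleGraph X) [DecidableRel G.Adj] (k d : ℕ)
    (hconn : G.Connected) (hreg : G.IsRegularOfDegree k)
    (hspec : (spectrum ℝ (G.adjMatrix ℝ)).ncard = d + 1)
    (hhad : ∀ M ∈ Submodule.span ℝ
        (Set.range fun j : Fin (d + 1) => (G.adjMatrix ℝ) ^ (j : ℕ)),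
      ∀ N ∈ Submodule.span ℝ
        (Set.range fun j : Fin (d + 1) => (G.adjMatrix ℝ) ^ (j : ℕ)),
      Matrix.hadamard M N ∈ Submodule.span ℝ
        (Set.range fun j : Fin (d + 1) => (G.adjMatrix ℝ) ^ (j : ℕ))) :
    ∀ i : ℕ,
      (Matrix.of fun x y : X => if G.dist x y = i then (1 : ℝ) else 0) ∈
        Submodule.span ℝ
          (Set.range fun j : Fin (d + 1) => (G.adjMatrix ℝ) ^ (j : ℕ)) := by
  classical
  intro i
  have hA : (G.adjMatrix ℝ).IsHermitian := by
    rw [Matrix.IsHermitian, Matrix.conjTranspose_eq_transpose_of_trivial]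
    exact G.isSymm_adjMatrix
  have key := key_mem (G.adjMatrix ℝ) hA d hspec
  -- diameter bound
  have hdist_le : ∀ x y : X, G.dist x y ≤ d := by
    intro x y
    by_contra hxy
    push_neg at hxy
    have hz : ∀ M ∈ Submodule.span ℝ
        (Set.range fun j : Fin (d + 1) => (G.adjMatrix ℝ) ^ (j : ℕ)), M x y = 0 := by
      intro M hM
      induction hM using Submodule.span_induction with
      | mem N hN =>
        obtain ⟨j, rfl⟩ := hN
        by_contra h
        have := dist_le_of_entry_ne h
        have := j.isLt
        omega
      | zero => rfl
      | add N P _ _ hN hP => rw [Matrix.add_apply, hN, hP, add_zero]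
      | smul c N _ hN => rw [Matrix.smul_apply, hN, smul_zero]
    exact entry_dist_ne hconn x y
      (hz _ (pow_mem (G.adjMatrix ℝ) d key (G.dist x y)))
  rcases Nat.lt_or_ge d i with hid | hid
  · -- i beyond the diameter: the matrix is zero
    have h0 : (Matrix.of fun x y : X => if G.dist x y = i then (1 : ℝ) else 0) = 0 := by
      ext x y
      rw [Matrix.of_apply, Matrix.zero_apply, if_neg]
      intro h
      have := hdist_le x y
      omega
    rw [h0]
    exact Submodule.zero_mem _
  · -- main case : i ≤ d
    set Mstar : Matrix X X ℝ := ∑ j ∈ Finset.range (d + 1),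
        (3 : ℝ) ^ j • Matrix.of (fun x y =>
          if ((G.adjMatrix ℝ) ^ j) x y = 0 then (0 : ℝ) else 1) with hMs
    have hMmem : Mstar ∈ Submodule.span ℝ
        (Set.range fun j : Fin (d + 1) => (G.adjMatrix ℝ) ^ (j : ℕ)) := by
      apply Submodule.sum_mem
      intro j hj
      exact Submodule.smul_mem _ _
        (gapply_mem (G.adjMatrix ℝ) d hhad
          (gen_mem (G.adjMatrix ℝ) d (by have := Finset.mem_range.mp hj; omega))
          (fun t => if t = 0 then 0 else 1) (by simp))
    have hMval : ∀ x y : X, Mstar x y =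
        ∑ j ∈ (Finset.range (d + 1)).filter (fun j => ((G.adjMatrix ℝ) ^ j) x y ≠ 0),
          (3 : ℝ) ^ j := by
      intro x y
      rw [hMs, Matrix.sum_apply, Finset.sum_filter]
      apply Finset.sum_congr rfl
      intro j _
      simp only [Matrix.smul_apply, Matrix.of_apply, smul_eq_mul]
      by_cases h : ((G.adjMatrix ℝ) ^ j) x y = 0 <;> simp [h]
    set P : ℝ → Prop := fun t => ∃ T : Finset ℕ,
      T ⊆ Finset.Ico i (d + 1) ∧ i ∈ T ∧ t = ∑ j ∈ T, (3 : ℝ) ^ j with hP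
    set g : ℝ → ℝ := fun t => if P t then 1 else 0 with hg
    have hg0 : g 0 = 0 := by
      rw [hg]
      simp only
      rw [if_neg]
      rintro ⟨T, hsub, hiT, heq⟩
      have h3 : (3 : ℝ) ^ i ≤ ∑ j ∈ T, (3 : ℝ) ^ j :=
        Finset.single_le_sum (fun j _ => by positivity) hiT
      have h4 : (0 : ℝ) < 3 ^ i := by positivity
      rw [← heq] at h3
      linarith
    have hPiff : ∀ x y : X, P (Mstar x y) ↔ G.dist x y = i := by
      intro x y
      rw [hMval x y]
      constructor
      · rintro ⟨T, hsub, hiT, heq⟩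
        have hTeq : (Finset.range (d + 1)).filter
            (fun j => ((G.adjMatrix ℝ) ^ j) x y ≠ 0) = T :=
          sum3_inj_real (n := d + 1)
            (fun j hj => Finset.mem_range.mp (Finset.mem_filter.mp hj).1)
            (fun j hj => (Finset.mem_Ico.mp (hsub hj)).2)
            heq
        have hiT0 : i ∈ (Finset.range (d + 1)).filter
            (fun j => ((G.adjMatrix ℝ) ^ j) x y ≠ 0) := hTeq ▸ hiT
        have hd1 : G.dist x y ≤ i := dist_le_of_entry_ne (Finset.mem_filter.mp hiT0).2
        have hdT0 : G.dist x y ∈ (Finset.range (d + 1)).filter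
            (fun j => ((G.adjMatrix ℝ) ^ j) x y ≠ 0) :=
          Finset.mem_filter.mpr ⟨Finset.mem_range.mpr (by have := hdist_le x y; omega),
            entry_dist_ne hconn x y⟩
        have hd2 : i ≤ G.dist x y := (Finset.mem_Ico.mp (hsub (hTeq ▸ hdT0))).1
        omega
      · intro hdist
        refine ⟨(Finset.range (d + 1)).filter
          (fun j => ((G.adjMatrix ℝ) ^ j) x y ≠ 0), ?_, ?_, rfl⟩
        · intro j hj
          obtain ⟨hj1, hj2⟩ := Finset.mem_filter.mp hj
          exact Finset.mem_Ico.mpr ⟨hdist ▸ dist_le_of_entry_ne hj2, Finset.mem_range.mp hj1⟩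
        · exact Finset.mem_filter.mpr ⟨Finset.mem_range.mpr (by omega),
            hdist ▸ entry_dist_ne hconn x y⟩
    have hrepr : (Matrix.of fun x y : X => if G.dist x y = i then (1 : ℝ) else 0) =
        Matrix.of (fun x y => g (Mstar x y)) := by
      ext x y
      rw [Matrix.of_apply, Matrix.of_apply, hg]
      simp only
      rw [if_congr (Iff.symm (hPiff x y)) rfl rfl]
    rw [hrepr]
    exact gapply_mem (G.adjMatrix ℝ) d hhad hMmem g hg0
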